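/- A vector field v in the two-dimensional Raviart–Thomas space RT_p is divergence-free if and only if v = curl φ (the rotated gradient (−∂₂φ, ∂₁φ)) for some polynomial φ of total degree ≤ p+1. Equivalently, RT_p ∩ ker(div) = curl(𝒫_{p+1}). -/

import Mathlib

open MvPolynomial Finsupp

namespace RTaux

lemma fapp {a b : Fin 2 →₀ ℕ} (h : a = b) (k : Fin 2) : a k = b k := by rw [h]

lemma add_single_apply (e : Fin 2 →₀ ℕ) (i k : Fin 2) :
    (e + Finsupp.single i 1 : Fin 2 →₀ ℕ) k = e k + (if i = k then 1 else 0) := by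
  simp [Finsupp.single_apply]

lemma sub_single_apply (e : Fin 2 →₀ ℕ) (i k : Fin 2) :
    (e - Finsupp.single i 1 : Fin 2 →₀ ℕ) k = e k - (if i = k then 1 else 0) := by
  simp [Finsupp.single_apply]

lemma sumdeg (e : Fin 2 →₀ ℕ) : (e.sum fun _ n => n) = e 0 + e 1 := by
  rw [Finsupp.sum_fintype _ _ (fun _ => rfl), Fin.sum_univ_two]

lemma add_sub_single (e : Fin 2 →₀ ℕ) (i : Fin 2) :
    e + Finsupp.single i 1 - Finsupp.single i 1 = e := by
  ext k; rw [sub_single_apply, add_single_apply]; omega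

/-- Coefficient formula for the partial derivative. -/
lemma coeff_pderiv (i : Fin 2) (f : MvPolynomial (Fin 2) ℝ) (e : Fin 2 →₀ ℕ) :
    coeff e (pderiv i f) = ((e i : ℝ) + 1) * coeff (e + Finsupp.single i 1) f := by
  induction f using MvPolynomial.induction_on' with
  | add f g hf hg => simp [hf, hg, mul_add]
  | monomial d c =>
    rw [pderiv_monomial, coeff_monomial, coeff_monomial]
    by_cases h : d = e + Finsupp.single i 1
    · subst h
      rw [if_pos (add_sub_single e i), if_pos rfl]
      have h2 : (e + Finsupp.single i 1 : Fin 2 →₀ ℕ) i = e i + 1 := by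
        rw [add_single_apply]; simp
      rw [h2]; push_cast; ring
    · rw [if_neg h]
      by_cases h' : d - Finsupp.single i 1 = e
      · rw [if_pos h']
        have hdi : d i = 0 := by
          by_contra hdi
          apply h
          ext k
          have hk := fapp h' k
          rw [sub_single_apply] at hk
          rw [add_single_apply, ← hk]
          by_cases hik : i = k
          · subst hik; simp; omega
          · simp [hik]
        rw [hdi]; simp
      · rw [if_neg h', mul_zero]

lemma pderiv_comm (f : MvPolynomial (Fin 2) ℝ) :
    pderiv 0 (pderiv 1 f) = pderiv 1 (pderiv 0 f) := by
  apply MvPolynomial.ext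
  intro e
  rw [coeff_pderiv, coeff_pderiv, coeff_pderiv, coeff_pderiv]
  have h01 : (e + Finsupp.single (0:Fin 2) 1 : Fin 2 →₀ ℕ) 1 = e 1 := by
    rw [add_single_apply]; simp
  have h10 : (e + Finsupp.single (1:Fin 2) 1 : Fin 2 →₀ ℕ) 0 = e 0 := by
    rw [add_single_apply]; simp
  rw [h01, h10, add_right_comm]
  ring

lemma td_pderiv_le (i : Fin 2) (f : MvPolynomial (Fin 2) ℝ) {d : ℕ}
    (h : f.totalDegree ≤ d + 1) : (pderiv i f).totalDegree ≤ d := by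
  rw [MvPolynomial.totalDegree]
  apply Finset.sup_le
  intro e he
  rw [MvPolynomial.mem_support_iff, coeff_pderiv] at he
  have hc : coeff (e + Finsupp.single i 1) f ≠ 0 := by
    intro h0; rw [h0, mul_zero] at he; exact he rfl
  have h1 := MvPolynomial.le_totalDegree (MvPolynomial.mem_support_iff.mpr hc)
  rw [sumdeg] at h1 ⊢
  rw [add_single_apply, add_single_apply] at h1
  rcases Fin.exists_fin_two.mp ⟨i, rfl⟩ with h | h <;> (fin_cases i <;> simp at h1 <;> omega)

/-- Formal antiderivative with respect to variable `i`. -/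
noncomputable def antid (i : Fin 2) (f : MvPolynomial (Fin 2) ℝ) : MvPolynomial (Fin 2) ℝ :=
  f.support.sum fun e => monomial (e + Finsupp.single i 1) (f.coeff e / ((e i : ℝ) + 1))

lemma coeff_antid (i : Fin 2) (f : MvPolynomial (Fin 2) ℝ) (d : Fin 2 →₀ ℕ) :
    coeff d (antid i f) = coeff (d - Finsupp.single i 1) f / (d i : ℝ) := by
  rw [antid, MvPolynomial.coeff_sum]
  by_cases hd : d i = 0
  · rw [hd, Finset.sum_eq_zero]
    · simp
    · intro e _
      rw [coeff_monomial, if_neg]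
      intro h
      have := fapp h i
      rw [add_single_apply] at this
      simp [hd] at this
  · have key : ∀ e : Fin 2 →₀ ℕ, e + Finsupp.single i 1 = d ↔ e = d - Finsupp.single i 1 := by
      intro e
      constructor
      · intro h; ext k
        have hk := fapp h k
        rw [add_single_apply] at hk
        rw [sub_single_apply, ← hk]; omega
      · intro h; subst h; ext k
        rw [add_single_apply, sub_single_apply]
        by_cases hik : i = k
        · subst hik; simp; omega
        · simp [hik]
    have hdi : ((d - Finsupp.single i 1 : Fin 2 →₀ ℕ) i : ℕ) + 1 = d i := by
      rw [sub_single_apply]; simp; omega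
    by_cases hmem : d - Finsupp.single i 1 ∈ f.support
    · rw [Finset.sum_eq_single (d - Finsupp.single i 1)]
      · rw [coeff_monomial, if_pos ((key _).mpr rfl), ← hdi]
        push_cast; ring_nf
      · intro e _ hne
        rw [coeff_monomial, if_neg]
        intro h; exact hne ((key e).mp h)
      · intro h; exact absurd hmem h
    · rw [MvPolynomial.notMem_support_iff] at hmem
      rw [hmem, zero_div, Finset.sum_eq_zero]
      intro e he
      rw [coeff_monomial, if_neg]
      intro h
      rw [(key e).mp h] at he
      rw [MvPolynomial.mem_support_iff, hmem] at he
      exact he rfl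

lemma pderiv_antid_self (i : Fin 2) (f : MvPolynomial (Fin 2) ℝ) :
    pderiv i (antid i f) = f := by
  apply MvPolynomial.ext
  intro e
  rw [coeff_pderiv, coeff_antid, add_sub_single]
  have h2 : (e + Finsupp.single i 1 : Fin 2 →₀ ℕ) i = e i + 1 := by
    rw [add_single_apply]; simp
  rw [h2]
  push_cast
  field_simp

lemma pderiv_antid_comm (i j : Fin 2) (hij : j ≠ i) (f : MvPolynomial (Fin 2) ℝ) :
    pderiv j (antid i f) = antid i (pderiv j f) := by
  apply MvPolynomial.ext
  intro e
  rw [coeff_pderiv, coeff_antid, coeff_antid, coeff_pderiv]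
  have h1 : e + Finsupp.single j 1 - Finsupp.single i 1
      = e - Finsupp.single i 1 + Finsupp.single j 1 := by
    ext k
    rw [sub_single_apply, add_single_apply, add_single_apply, sub_single_apply]
    by_cases hik : i = k
    · subst hik; simp [hij]
    · simp [hik]
  have h2 : (e + Finsupp.single j 1 : Fin 2 →₀ ℕ) i = e i := by
    rw [add_single_apply]; simp [hij]
  have h3 : (e - Finsupp.single i 1 : Fin 2 →₀ ℕ) j = e j := by
    rw [sub_single_apply]; simp [Ne.symm hij]
  rw [h1, h2, h3]
  ring

lemma antid_zero (i : Fin 2) : antid i 0 = 0 := by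
  simp [antid]

lemma td_antid_le (i : Fin 2) (f : MvPolynomial (Fin 2) ℝ) :
    (antid i f).totalDegree ≤ f.totalDegree + 1 := by
  refine le_trans (MvPolynomial.totalDegree_finset_sum _ _) ?_
  apply Finset.sup_le
  intro e he
  refine le_trans (MvPolynomial.totalDegree_monomial_le _ _) ?_
  have h1 := MvPolynomial.le_totalDegree he
  rw [sumdeg] at h1
  have : ((e + Finsupp.single i 1 : Fin 2 →₀ ℕ).sum fun _ => id) =
      (e + Finsupp.single i 1 : Fin 2 →₀ ℕ).sum fun _ n => n := rfl
  rw [this, sumdeg, add_single_apply, add_single_apply]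
  rcases Fin.exists_fin_two.mp ⟨i, rfl⟩ with h | h <;> (fin_cases i <;> simp <;> omega)

end RTaux

section
open MvPolynomial Finsupp RTaux


/-- The Raviart–Thomas space of order `p` in two dimensions, at the level of
polynomial vector fields: `RT_p = (𝒫_p)² + x 𝒫̃_p`. -/
def RTpoly (p : ℕ) : Set (Fin 2 → MvPolynomial (Fin 2) ℝ) :=
  {v | ∃ q : Fin 2 → MvPolynomial (Fin 2) ℝ, ∃ r : MvPolynomial (Fin 2) ℝ,
    (∀ i, (q i).totalDegree ≤ p) ∧
    r ∈ MvPolynomial.homogeneousSubmodule (Fin 2) ℝ p ∧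
    ∀ i, v i = q i + MvPolynomial.X i * r}

/-- Divergence of a polynomial vector field. -/
noncomputable def divPoly (v : Fin 2 → MvPolynomial (Fin 2) ℝ) : MvPolynomial (Fin 2) ℝ :=
  MvPolynomial.pderiv 0 (v 0) + MvPolynomial.pderiv 1 (v 1)

/-- A field in `RT_p` is divergence-free iff it is the rotated gradient
`curl φ = (−∂₂φ, ∂₁φ)` of a polynomial `φ` of total degree `≤ p+1`:
`RT_p ∩ ker div = curl 𝒫_{p+1}`. -/
theorem RT_divfree_eq_curl (p : ℕ) :
    {v | v ∈ RTpoly p ∧ divPoly v = 0} =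
    {v : Fin 2 → MvPolynomial (Fin 2) ℝ | ∃ φ : MvPolynomial (Fin 2) ℝ,
      φ.totalDegree ≤ p + 1 ∧
      v 0 = -(MvPolynomial.pderiv 1 φ) ∧ v 1 = MvPolynomial.pderiv 0 φ} := by
  ext v
  simp only [Set.mem_setOf_eq]
  constructor
  · rintro ⟨⟨q, r, hq, hr, hv⟩, hdiv⟩
    -- Step 1: r = 0
    have hr' : MvPolynomial.IsHomogeneous r p := by
      rwa [MvPolynomial.mem_homogeneousSubmodule] at hr
    have hr0 : r = 0 := by
      apply MvPolynomial.ext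
      intro e
      rw [MvPolynomial.coeff_zero]
      have hdege : Finsupp.degree e = e 0 + e 1 := by
        rw [← sumdeg]; rfl
      by_cases hcase : e 0 + e 1 = p
      · -- use the divergence
        have h0 : coeff e (divPoly v) = 0 := by rw [hdiv]; rfl
        have hqz : ∀ i j : Fin 2, coeff e (pderiv i (q j)) = 0 := by
          intro i j
          rw [coeff_pderiv]
          have : coeff (e + Finsupp.single i 1) (q j) = 0 := by
            apply MvPolynomial.coeff_eq_zero_of_totalDegree_lt
            have hdd : (∑ k ∈ (e + Finsupp.single i 1 : Fin 2 →₀ ℕ).support,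
                (e + Finsupp.single i 1 : Fin 2 →₀ ℕ) k) = p + 1 := by
              have : (∑ k ∈ (e + Finsupp.single i 1 : Fin 2 →₀ ℕ).support,
                  (e + Finsupp.single i 1 : Fin 2 →₀ ℕ) k)
                  = ((e + Finsupp.single i 1 : Fin 2 →₀ ℕ).sum fun _ n => n) := rfl
              rw [this, sumdeg, add_single_apply, add_single_apply]
              rcases Fin.exists_fin_two.mp ⟨i, rfl⟩ with h | h <;>
                (fin_cases i <;> simp <;> omega)
            rw [hdd]
            exact lt_of_le_of_lt (hq j) (Nat.lt_succ_self p)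
          rw [this, mul_zero]
        have hXz : ∀ i : Fin 2, coeff e (pderiv i (X i * r)) = ((e i : ℝ) + 1) * coeff e r := by
          intro i
          rw [coeff_pderiv, add_comm e (Finsupp.single i 1), MvPolynomial.coeff_X_mul]
        have hexp : coeff e (divPoly v) = ((p : ℝ) + 2) * coeff e r := by
          rw [divPoly, hv 0, hv 1]
          rw [MvPolynomial.coeff_add, map_add, map_add, MvPolynomial.coeff_add,
            MvPolynomial.coeff_add, hqz 0 0, hqz 1 1, hXz 0, hXz 1]
          have hcast : ((e 0 : ℕ) : ℝ) + ((e 1 : ℕ) : ℝ) = (p : ℝ) := by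
            exact_mod_cast congrArg (Nat.cast : ℕ → ℝ) hcase
          linear_combination coeff e r * hcast
        rw [hexp] at h0
        have hp2 : ((p : ℝ) + 2) ≠ 0 := by positivity
        exact (mul_eq_zero.mp h0).resolve_left hp2
      · exact hr'.coeff_eq_zero (by rw [hdege]; exact hcase)
    have hv' : ∀ i, v i = q i := by
      intro i; rw [hv i, hr0, mul_zero, add_zero]
    have hdv : ∀ i, (v i).totalDegree ≤ p := by
      intro i; rw [hv' i]; exact hq i
    -- Step 2: construct φ
    set A := antid 0 (v 1) with hA
    set h := -(v 0 + pderiv 1 A) with hh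
    refine ⟨A + antid 1 h, ?_, ?_, ?_⟩
    · -- degree bound
      have hdA : A.totalDegree ≤ p + 1 :=
        le_trans (td_antid_le 0 (v 1)) (by have := hdv 1; omega)
      have hdh : h.totalDegree ≤ p := by
        rw [hh, MvPolynomial.totalDegree_neg]
        refine le_trans (MvPolynomial.totalDegree_add _ _) ?_
        exact max_le (hdv 0) (td_pderiv_le 1 A hdA)
      refine le_trans (MvPolynomial.totalDegree_add _ _) ?_
      exact max_le hdA (le_trans (td_antid_le 1 h) (by omega))
    · -- v 0 = -∂₁ φ
      rw [map_add, pderiv_antid_self 1 h, hh]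
      ring
    · -- v 1 = ∂₀ φ
      have hph : pderiv 0 h = 0 := by
        rw [hh, map_neg, map_add, hA, pderiv_comm, pderiv_antid_self 0 (v 1)]
        have : pderiv 0 (v 0) + pderiv 1 (v 1) = 0 := hdiv
        rw [neg_eq_zero]
        linear_combination this
      rw [map_add, pderiv_antid_self 0 (v 1),
        pderiv_antid_comm 1 0 (by decide) h, hph, antid_zero, add_zero]
  · rintro ⟨φ, hφ, h0, h1⟩
    constructor
    · refine ⟨v, 0, ?_, Submodule.zero_mem _, fun i => by rw [mul_zero, add_zero]⟩
      intro i
      fin_cases i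
      · show (v 0).totalDegree ≤ p
        rw [h0, MvPolynomial.totalDegree_neg]; exact td_pderiv_le 1 φ hφ
      · show (v 1).totalDegree ≤ p
        rw [h1]; exact td_pderiv_le 0 φ hφ
    · rw [divPoly, h0, h1, map_neg, pderiv_comm]
      ring

end
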